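/- Every permutation in the symmetric group S_n can be written as a product στ where σ has order dividing 2 and τ has order dividing 3. -/

import Mathlib

open Equiv Equiv.Perm

section helpers

variable {α : Type*} [DecidableEq α]

private lemma formPerm_concat : ∀ (l : List α) (hl : l ≠ []) (x : α),
    (l ++ [x]).formPerm = l.formPerm * Equiv.swap (l.getLast hl) x
  | [a], _, x => by simp [List.formPerm_pair]
  | a :: b :: t, _, x => by
    have h := formPerm_concat (b :: t) (by simp) x
    simp only [List.cons_append, List.formPerm_cons_cons, List.getLast_cons_cons] at h ⊢
    rw [h, mul_assoc]

private lemma swap_sq {a b : α} : Equiv.swap a b ^ 2 = 1 := by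
  rw [sq, Equiv.swap_mul_self]

private lemma cyc_cube [Fintype α] {x y z : α} (hxy : x ≠ y) (hxz : x ≠ z) (hyz : y ≠ z) :
    (Equiv.swap x y * Equiv.swap y z) ^ 3 = 1 := by
  have h : IsThreeCycle (Equiv.swap y x * Equiv.swap y z) :=
    isThreeCycle_swap_mul_swap_same hxy.symm hyz hxz
  have ho := h.orderOf
  rw [Equiv.swap_comm x y, ← ho]
  exact pow_orderOf_eq_one _

private lemma cyc_support [Fintype α] {x y z : α} (hxy : x ≠ y) (hyz : y ≠ z) :
    (Equiv.swap x y * Equiv.swap y z).support ⊆ {x, y, z} := by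
  refine (Equiv.Perm.support_mul_le _ _).trans ?_
  rw [Equiv.Perm.support_swap hxy, Equiv.Perm.support_swap hyz]
  intro v
  simp only [Finset.sup_eq_union, Finset.mem_union, Finset.mem_insert, Finset.mem_singleton]
  tauto

private lemma disjoint_of_support_subset [Fintype α] {f g : Perm α} {s t : Finset α}
    (hf : f.support ⊆ s) (hg : g.support ⊆ t) (h : Disjoint s t) :
    Equiv.Perm.Disjoint f g :=
  Equiv.Perm.disjoint_iff_disjoint_support.mpr
    (Finset.disjoint_of_subset_left hf (Finset.disjoint_of_subset_right hg h))

private lemma swap_conj_identity {c d e : α} (hcd : c ≠ d) (hce : c ≠ e) :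
    Equiv.swap c e * Equiv.swap e d = Equiv.swap d e * Equiv.swap c d := by
  have h := Equiv.swap_apply_apply (Equiv.swap d e) c d
  rw [Equiv.swap_apply_of_ne_of_ne hcd hce, Equiv.swap_apply_left] at h
  rw [Equiv.swap_comm e d, h]
  simp [mul_assoc, Equiv.swap_inv, Equiv.swap_mul_self]

end helpers

section key

variable {α : Type*} [DecidableEq α] [Fintype α]

private lemma key :
    ∀ k : ℕ, k ≠ 0 → k ≠ 2 → k ≤ Fintype.card α →
    ∃ (l : List α) (σ τ : Equiv.Perm α) (q : α), l.Nodup ∧ l.length = k ∧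
      l.formPerm = σ * τ ∧ σ ^ 2 = 1 ∧ τ ^ 3 = 1 ∧
      σ.support ⊆ l.toFinset ∧ τ.support ⊆ l.toFinset ∧ q ∈ l ∧ σ q = q := by
  intro k
  induction k using Nat.strong_induction_on with
  | _ k IH =>
  intro hk0 hk2 hkcard
  by_cases hk1 : k = 1
  · subst hk1
    have : Nonempty α := Fintype.card_pos_iff.mp (by omega)
    obtain ⟨a⟩ := this
    exact ⟨[a], 1, 1, a, by simp, rfl, by simp, by simp, by simp, by simp, by simp,
      by simp, rfl⟩
  by_cases hk3 : k = 3
  · subst hk3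
    obtain ⟨t, -, ht⟩ := Finset.exists_subset_card_eq
      (show 3 ≤ Finset.univ.card (α := α) by simpa using hkcard)
    obtain ⟨x, y, z, hxy, hxz, hyz, rfl⟩ := Finset.card_eq_three.mp ht
    refine ⟨[x, y, z], 1, Equiv.swap x y * Equiv.swap y z, x, by simp [hxy, hxz, hyz], rfl,
      by simp [List.formPerm_cons_cons, List.formPerm_pair], by simp,
      cyc_cube hxy hxz hyz, by simp, ?_, by simp, by simp⟩
    refine (cyc_support hxy hyz).trans ?_
    intro v hv; simp only [Finset.mem_insert, Finset.mem_singleton] at hv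
    simp [List.mem_toFinset]; tauto
  by_cases hk5 : k = 5
  · subst hk5
    obtain ⟨t, -, ht⟩ := Finset.exists_subset_card_eq
      (show 3 ≤ Finset.univ.card (α := α) by simpa using by omega)
    obtain ⟨a, b, c, hab, hac, hbc, rfl⟩ := Finset.card_eq_three.mp ht
    have hcard3 : ({a, b, c} : Finset α).card = 3 := ht
    have hsd : (Finset.univ \ ({a, b, c} : Finset α)).card = Fintype.card α - 3 := by
      rw [Finset.card_sdiff_of_subset (Finset.subset_univ _), Finset.card_univ, hcard3]
    obtain ⟨t2, ht2sub, ht2⟩ := Finset.exists_subset_card_eq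
      (show 2 ≤ (Finset.univ \ ({a, b, c} : Finset α)).card by omega)
    obtain ⟨d, e, hde, rfl⟩ := Finset.card_eq_two.mp ht2
    have hd : d ∈ Finset.univ \ ({a, b, c} : Finset α) := ht2sub (by simp)
    have he : e ∈ Finset.univ \ ({a, b, c} : Finset α) := ht2sub (by simp)
    simp only [Finset.mem_sdiff, Finset.mem_insert, Finset.mem_singleton, not_or] at hd he
    obtain ⟨-, hda', hdb', hdc'⟩ := hd
    obtain ⟨-, hea', heb', hec'⟩ := he
    have hda : d ≠ a := hda'
    have hdb : d ≠ b := hdb'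
    have hdc : d ≠ c := hdc'
    have hea : e ≠ a := hea'
    have heb : e ≠ b := heb'
    have hec : e ≠ c := hec'
    refine ⟨[a, b, c, e, d], Equiv.swap a b * Equiv.swap d e,
      Equiv.swap b c * Equiv.swap c d, c, ?_, rfl, ?_, ?_, ?_, ?_, ?_, by simp, ?_⟩
    · simp [List.nodup_cons, hab, hac, hbc, Ne.symm hea, Ne.symm hda, Ne.symm heb,
        Ne.symm hdb, Ne.symm hec, Ne.symm hdc, (Ne.symm hde : e ≠ d)]
    · -- formPerm [a,b,c,e,d] = (swap a b * swap d e) * (swap b c * swap c d)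
      have hcomm : Equiv.swap d e * Equiv.swap b c = Equiv.swap b c * Equiv.swap d e := by
        have : Equiv.Perm.Disjoint (Equiv.swap d e) (Equiv.swap b c) :=
          disjoint_of_support_subset (s := {d, e}) (t := {b, c})
            (by rw [Equiv.Perm.support_swap hde])
            (by rw [Equiv.Perm.support_swap hbc])
            (by simp only [Finset.disjoint_left, Finset.mem_insert, Finset.mem_singleton]; rintro v (rfl|rfl) h <;> tauto)
        exact this.commute.eq
      have h1 : Equiv.swap c e * Equiv.swap e d = Equiv.swap d e * Equiv.swap c d :=
        swap_conj_identity hdc.symm hec.symm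
      show List.formPerm _ = _
      simp only [List.formPerm_cons_cons, List.formPerm_pair, List.formPerm_singleton, mul_one]
      rw [h1]
      simp only [← mul_assoc]
      rw [mul_assoc (Equiv.swap a b) (Equiv.swap b c), ← hcomm]
      simp [mul_assoc]
    · have : Equiv.Perm.Disjoint (Equiv.swap a b) (Equiv.swap d e) :=
        disjoint_of_support_subset (s := {a, b}) (t := {d, e})
          (by rw [Equiv.Perm.support_swap hab])
          (by rw [Equiv.Perm.support_swap hde])
          (by simp only [Finset.disjoint_left, Finset.mem_insert, Finset.mem_singleton]; rintro v (rfl|rfl) h <;> tauto)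
      rw [this.commute.mul_pow, swap_sq, swap_sq, mul_one]
    · exact cyc_cube hbc (fun h => hdb h.symm) (fun h => hdc h.symm)
    · refine (Equiv.Perm.support_mul_le _ _).trans ?_
      intro v hv
      simp only [Finset.sup_eq_union, Finset.mem_union] at hv
      rcases hv with hv | hv
      · have := (Equiv.Perm.support_swap hab) ▸ hv
        simp only [Finset.mem_insert, Finset.mem_singleton] at this
        simp [List.mem_toFinset]; tauto
      · have := (Equiv.Perm.support_swap hde) ▸ hv
        simp only [Finset.mem_insert, Finset.mem_singleton] at this
        simp [List.mem_toFinset]; tauto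
    · refine (cyc_support hbc (fun h => hdc h.symm)).trans ?_
      intro v hv
      simp only [Finset.mem_insert, Finset.mem_singleton] at hv
      simp [List.mem_toFinset]; tauto
    · rw [mul_apply, Equiv.swap_apply_of_ne_of_ne hdc.symm hec.symm]
      exact Equiv.swap_apply_of_ne_of_ne hac.symm hbc.symm
  obtain ⟨l, σ, τ, q, hnd, hlen, hform, hσ2, hτ3, hσsupp, hτsupp, hql, hσq⟩ :=
    IH (k - 3) (by omega) (by omega) (by omega) (by omega)
  have hτL : τ (τ⁻¹ q) = q := Equiv.apply_symm_apply τ q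
  have hLl : τ⁻¹ q ∈ l := by
    by_cases h : q ∈ τ.support
    · have h1 : τ⁻¹ q ∈ (τ⁻¹).support := by
        have : q ∈ (τ⁻¹).support := by rwa [Equiv.Perm.support_inv]
        exact Equiv.Perm.apply_mem_support.mpr this
      rw [Equiv.Perm.support_inv] at h1
      exact List.mem_toFinset.mp (hτsupp h1)
    · have h1 : τ q = q := Equiv.Perm.notMem_support.mp h
      have h2 : τ⁻¹ q = q := by
        conv_lhs => rw [← h1]
        exact Equiv.symm_apply_apply τ q
      rw [h2]; exact hql
  obtain ⟨s, t, hsplit⟩ := List.append_of_mem hLl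
  set L := τ⁻¹ q with hLdef
  set lr : List α := (t ++ s) ++ [L] with hlr
  have hrot : l ~r lr := by
    have h1 : l ~r (L :: t) ++ s := by rw [hsplit]; exact List.isRotated_append
    have h2 : (L :: t) ++ s = [L] ++ (t ++ s) := by simp
    have h3 : ([L] ++ (t ++ s) : List α) ~r (t ++ s) ++ [L] := List.isRotated_append
    rw [h2] at h1
    exact h1.trans h3
  have hndr : lr.Nodup := hrot.perm.nodup_iff.mp hnd
  have hmemr : ∀ v, v ∈ lr ↔ v ∈ l := fun v => (hrot.perm.mem_iff).symm
  have hformr : lr.formPerm = σ * τ := by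
    rw [← List.formPerm_eq_of_isRotated hnd hrot]; exact hform
  have hcard_l : l.toFinset.card = k - 3 := by rw [List.toFinset_card_of_nodup hnd, hlen]
  have hsdc : (Finset.univ \ l.toFinset).card = Fintype.card α - (k - 3) := by
    rw [Finset.card_sdiff_of_subset (Finset.subset_univ _), Finset.card_univ, hcard_l]
  obtain ⟨t3, ht3sub, ht3⟩ := Finset.exists_subset_card_eq
    (show 3 ≤ (Finset.univ \ l.toFinset).card by omega)
  obtain ⟨x, y, z, hxy, hxz, hyz, rfl⟩ := Finset.card_eq_three.mp ht3
  have hfresh : ∀ v ∈ ({x, y, z} : Finset α), v ∉ l := by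
    intro v hv
    have := ht3sub hv
    simp only [Finset.mem_sdiff, List.mem_toFinset] at this
    exact this.2
  have hx : x ∉ l := hfresh x (by simp)
  have hy : y ∉ l := hfresh y (by simp)
  have hz : z ∉ l := hfresh z (by simp)
  refine ⟨lr ++ [x, y, z], σ * Equiv.swap q x, τ * (Equiv.swap x y * Equiv.swap y z), y,
    ?_, ?_, ?_, ?_, ?_, ?_, ?_, ?_, ?_⟩
  · rw [List.nodup_append]
    refine ⟨hndr, by simp [hxy, hxz, hyz], ?_⟩
    intro v hv b hv' hvb; subst hvb
    simp only [List.mem_cons, List.mem_singleton, List.not_mem_nil, or_false] at hv'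
    have hvl : v ∈ l := (hmemr v).mp hv
    rcases hv' with rfl | rfl | rfl
    · exact hx hvl
    · exact hy hvl
    · exact hz hvl
  · have hlenr : lr.length = k - 3 := by
      rw [← hlen]; exact hrot.perm.length_eq.symm
    simp [hlenr]; omega
  · have hne1 : lr ≠ [] := by simp [hlr]
    have hlast : lr.getLast hne1 = L := List.getLast_append_singleton (t ++ s)
    have e1 : (lr ++ [x]).formPerm = lr.formPerm * Equiv.swap L x := by
      rw [formPerm_concat lr hne1 x, hlast]
    have e2 : (lr ++ [x] ++ [y]).formPerm = (lr ++ [x]).formPerm * Equiv.swap x y := by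
      rw [formPerm_concat (lr ++ [x]) (by simp) y, List.getLast_append_singleton]
    have e3 : (lr ++ [x] ++ [y] ++ [z]).formPerm =
        (lr ++ [x] ++ [y]).formPerm * Equiv.swap y z := by
      rw [formPerm_concat (lr ++ [x] ++ [y]) (by simp) z, List.getLast_append_singleton]
    have hassoc : lr ++ [x, y, z] = lr ++ [x] ++ [y] ++ [z] := by simp
    have hτx : τ x = x := by
      refine Equiv.Perm.notMem_support.mp fun h => hx ?_
      exact List.mem_toFinset.mp (hτsupp h)
    have hswap : τ * Equiv.swap L x = Equiv.swap q x * τ := by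
      have h := Equiv.swap_apply_apply τ L x
      rw [hτL, hτx] at h
      rw [h]
      simp [mul_assoc]
    rw [hassoc, e3, e2, e1, hformr]
    calc σ * τ * Equiv.swap L x * Equiv.swap x y * Equiv.swap y z
        = σ * (τ * Equiv.swap L x) * (Equiv.swap x y * Equiv.swap y z) := by
          simp [mul_assoc]
      _ = σ * (Equiv.swap q x * τ) * (Equiv.swap x y * Equiv.swap y z) := by rw [hswap]
      _ = σ * Equiv.swap q x * (τ * (Equiv.swap x y * Equiv.swap y z)) := by
          simp [mul_assoc]
  · have hqx : q ≠ x := fun h => hx (h ▸ hql)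
    have hσx : σ x = x := by
      refine Equiv.Perm.notMem_support.mp fun h => hx ?_
      exact List.mem_toFinset.mp (hσsupp h)
    have hdisj : Equiv.Perm.Disjoint σ (Equiv.swap q x) := by
      rw [Equiv.Perm.disjoint_iff_disjoint_support, Finset.disjoint_right]
      intro v hv
      rw [Equiv.Perm.support_swap hqx] at hv
      simp only [Finset.mem_insert, Finset.mem_singleton] at hv
      rcases hv with rfl | rfl
      · exact Equiv.Perm.notMem_support.mpr hσq
      · exact Equiv.Perm.notMem_support.mpr hσx
    rw [hdisj.commute.mul_pow, hσ2, swap_sq, mul_one]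
  · have hdisj : Equiv.Perm.Disjoint τ (Equiv.swap x y * Equiv.swap y z) := by
      refine disjoint_of_support_subset hτsupp (cyc_support hxy hyz) ?_
      rw [Finset.disjoint_right]
      intro v hv
      simp only [Finset.mem_insert, Finset.mem_singleton] at hv
      rw [List.mem_toFinset]
      rcases hv with rfl | rfl | rfl
      · exact hx
      · exact hy
      · exact hz
    rw [hdisj.commute.mul_pow, hτ3, cyc_cube hxy hxz hyz, mul_one]
  · refine (Equiv.Perm.support_mul_le _ _).trans ?_
    intro v hv
    simp only [Finset.sup_eq_union, Finset.mem_union] at hv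
    rw [List.mem_toFinset, List.mem_append]
    rcases hv with hv | hv
    · exact Or.inl ((hmemr v).mpr (List.mem_toFinset.mp (hσsupp hv)))
    · have hqx : q ≠ x := fun h => hx (h ▸ hql)
      rw [Equiv.Perm.support_swap hqx] at hv
      simp only [Finset.mem_insert, Finset.mem_singleton] at hv
      rcases hv with rfl | rfl
      · exact Or.inl ((hmemr v).mpr hql)
      · exact Or.inr (by simp)
  · refine (Equiv.Perm.support_mul_le _ _).trans ?_
    intro v hv
    simp only [Finset.sup_eq_union, Finset.mem_union] at hv
    rw [List.mem_toFinset, List.mem_append]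
    rcases hv with hv | hv
    · exact Or.inl ((hmemr v).mpr (List.mem_toFinset.mp (hτsupp hv)))
    · have := cyc_support hxy hyz hv
      simp only [Finset.mem_insert, Finset.mem_singleton] at this
      rcases this with rfl | rfl | rfl
      · exact Or.inr (by simp)
      · exact Or.inr (by simp)
      · exact Or.inr (by simp)
  · rw [List.mem_append]; exact Or.inr (by simp)
  · have hyq : y ≠ q := fun h => hy (h ▸ hql)
    have hσy : σ y = y := by
      refine Equiv.Perm.notMem_support.mp fun h => hy ?_
      exact List.mem_toFinset.mp (hσsupp h)
    rw [mul_apply, Equiv.swap_apply_of_ne_of_ne hyq hxy.symm, hσy]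

end key

theorem perm_eq_prod_order_two_and_order_three (n : ℕ) (π : Equiv.Perm (Fin n)) :
    ∃ σ τ : Equiv.Perm (Fin n), σ ^ 2 = 1 ∧ τ ^ 3 = 1 ∧ π = σ * τ := by
  classical
  have main : ∀ π : Equiv.Perm (Fin n), ∃ σ τ : Equiv.Perm (Fin n),
      σ ^ 2 = 1 ∧ τ ^ 3 = 1 ∧ π = σ * τ ∧ σ.support ⊆ π.support ∧ τ.support ⊆ π.support := by
    intro π
    induction π using Equiv.Perm.cycle_induction_on with
    | base_one => exact ⟨1, 1, one_pow 2, one_pow 3, (one_mul 1).symm, by simp, by simp⟩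
    | base_cycles c hc =>
      by_cases h2 : c.support.card = 2
      · have ho : orderOf c = 2 := by rw [hc.orderOf, h2]
        refine ⟨c, 1, ?_, one_pow 3, (mul_one c).symm, le_refl _, by simp⟩
        rw [← ho]; exact pow_orderOf_eq_one c
      · have hge : 2 ≤ c.support.card := hc.two_le_card_support
        have hle : c.support.card ≤ Fintype.card (Fin n) := by
          rw [← Finset.card_univ]; exact Finset.card_le_univ _
        obtain ⟨l, σ, τ, q, hnd, hlen, hform, hσ2, hτ3, hσsupp, hτsupp, -, -⟩ :=
          key c.support.card (by omega) h2 hle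
        have hlen2 : 2 ≤ l.length := by omega
        have hE : (l.formPerm).IsCycle := List.isCycle_formPerm hnd hlen2
        have hnsing : ∀ v : Fin n, l ≠ [v] := by
          intro v h; rw [h] at hlen; simp at hlen; omega
        have hsuppE : (l.formPerm).support = l.toFinset :=
          List.support_formPerm_of_nodup l hnd hnsing
        have hcardE : (l.formPerm).support.card = c.support.card := by
          rw [hsuppE, List.toFinset_card_of_nodup hnd, hlen]
        obtain ⟨g, hg⟩ := isConj_iff.mp (hE.isConj hc hcardE)
        refine ⟨g * σ * g⁻¹, g * τ * g⁻¹, ?_, ?_, ?_, ?_, ?_⟩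
        · have h := map_pow (MulAut.conj g) σ 2
          simp only [MulAut.conj_apply] at h
          rw [← h, hσ2]; simp
        · have h := map_pow (MulAut.conj g) τ 3
          simp only [MulAut.conj_apply] at h
          rw [← h, hτ3]; simp
        · rw [← hg, hform]
          simp only [mul_assoc, inv_mul_cancel_left]
        · rw [← hg, Equiv.Perm.support_conj, Equiv.Perm.support_conj]
          exact Finset.map_subset_map.mpr (hσsupp.trans (le_of_eq hsuppE.symm))
        · rw [← hg, Equiv.Perm.support_conj, Equiv.Perm.support_conj]
          exact Finset.map_subset_map.mpr (hτsupp.trans (le_of_eq hsuppE.symm))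
    | induction_disjoint f g hdisj hc hf hg =>
      obtain ⟨σ1, τ1, hσ1, hτ1, he1, hs1, ht1⟩ := hf
      obtain ⟨σ2, τ2, hσ2', hτ2', he2, hs2, ht2⟩ := hg
      have hsupp := hdisj.support_mul
      have hdd : _root_.Disjoint f.support g.support :=
        Equiv.Perm.disjoint_iff_disjoint_support.mp hdisj
      have d12 : ∀ (a b : Equiv.Perm (Fin n)), a.support ⊆ f.support → b.support ⊆ g.support →
          Equiv.Perm.Disjoint a b := fun a b ha hb =>
        disjoint_of_support_subset ha hb hdd
      have hσσ := (d12 σ1 σ2 hs1 hs2).commute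
      have hττ := (d12 τ1 τ2 ht1 ht2).commute
      have hτσ := (d12 τ1 σ2 ht1 hs2).commute
      refine ⟨σ1 * σ2, τ1 * τ2, ?_, ?_, ?_, ?_, ?_⟩
      · rw [hσσ.mul_pow, hσ1, hσ2', mul_one]
      · rw [hττ.mul_pow, hτ1, hτ2', mul_one]
      · rw [he1, he2]
        calc σ1 * τ1 * (σ2 * τ2) = σ1 * (τ1 * σ2) * τ2 := by simp [mul_assoc]
          _ = σ1 * (σ2 * τ1) * τ2 := by rw [hτσ.eq]
          _ = σ1 * σ2 * (τ1 * τ2) := by simp [mul_assoc]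
      · refine (Equiv.Perm.support_mul_le _ _).trans ?_
        rw [hsupp]
        exact Finset.union_subset_union hs1 hs2
      · refine (Equiv.Perm.support_mul_le _ _).trans ?_
        rw [hsupp]
        exact Finset.union_subset_union ht1 ht2
  obtain ⟨σ, τ, h2, h3, he, -, -⟩ := main π
  exact ⟨σ, τ, h2, h3, he⟩
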